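/- Let n ≥ 1 be an integer and λ > n a real number, and suppose the points π/2, π/2 − lπ/(2λ) (1 ≤ l ≤ n) and lπ/(2λ) (1 ≤ l ≤ n−1) are pairwise distinct. Then in the strip 0 < Re u ≤ π/2 the meromorphic function R_0^{(n)}(u) has poles exactly at: u = π/2 (simple), u = lπ/(2λ) for l = 1, …, n−1 (simple), u = π/2 − nπ/(2λ) (simple), and u = π/2 − lπ/(2λ) for l = 1, …, n−1 (order two); and R_0^{(n)} has no zeroes in this strip. -/

import Mathlib

open Complex Real Filter Topology

/-- For a real parameter `y`, the trigonometric block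
`(y)_u := sin((u+πy)/2)/sin((u−πy)/2)`. -/
noncomputable def blk (y : ℝ) (u : ℂ) : ℂ :=
  Complex.sin ((u + (Real.pi * y : ℝ)) / 2) / Complex.sin ((u - (Real.pi * y : ℝ)) / 2)

/-- The boundary-parameter-independent factor `R_0^{(n)}(u)` of the ground-state
reflection amplitude of the `n`-th breather. -/
noncomputable def R0brn (lam : ℝ) (n : ℕ) (u : ℂ) : ℂ :=
  (blk (1 / 2) u * blk ((n : ℝ) / (2 * lam) + 1) u / blk ((n : ℝ) / (2 * lam) + 3 / 2) u) *
  ∏ l ∈ Finset.Icc 1 (n - 1),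
    (blk ((l : ℝ) / (2 * lam)) u * blk ((l : ℝ) / (2 * lam) + 1) u) /
      (blk ((l : ℝ) / (2 * lam) + 3 / 2) u) ^ 2

/-- `f` has a pole of order `m` at `p`. -/
def HasPoleOfOrder (f : ℂ → ℂ) (p : ℂ) (m : ℕ) : Prop :=
  ∃ h : ℂ → ℂ, AnalyticAt ℂ h p ∧ h p ≠ 0 ∧
    ∀ᶠ u in 𝓝[≠] p, f u = h u / (u - p) ^ m

noncomputable def Sb (c : ℝ) (u : ℂ) : ℂ := Complex.sin ((u + (c : ℂ)) / 2)

lemma Sb_diff (c : ℝ) : Differentiable ℂ (Sb c) :=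
  Complex.differentiable_sin.comp ((differentiable_id.add_const _).div_const 2)

lemma Sb_analyticAt (c : ℝ) (p : ℂ) : AnalyticAt ℂ (Sb c) p :=
  (Sb_diff c).analyticAt p

lemma Sb_eq_zero_iff {c : ℝ} {u : ℂ} :
    Sb c u = 0 ↔ ∃ k : ℤ, u = ((2 * k * Real.pi - c : ℝ) : ℂ) := by
  rw [Sb, Complex.sin_eq_zero_iff]
  constructor
  · rintro ⟨k, hk⟩
    refine ⟨k, ?_⟩
    have : u = 2 * (k : ℂ) * (Real.pi : ℂ) - (c : ℂ) := by
      field_simp at hk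
      linear_combination hk
    rw [this]
    push_cast
    ring
  · rintro ⟨k, hk⟩
    refine ⟨k, ?_⟩
    rw [hk]
    push_cast
    ring

lemma strip_zero {c : ℝ} {u : ℂ} (h1 : 0 < u.re) (h2 : u.re ≤ Real.pi / 2)
    (h : Sb c u = 0) :
    ∃ k : ℤ, u = ((2 * k * Real.pi - c : ℝ) : ℂ) ∧
      0 < 2 * k * Real.pi - c ∧ 2 * k * Real.pi - c ≤ Real.pi / 2 := by
  obtain ⟨k, hk⟩ := Sb_eq_zero_iff.1 h
  refine ⟨k, hk, ?_, ?_⟩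
  · have := h1; rwa [hk, Complex.ofReal_re] at this
  · have := h2; rwa [hk, Complex.ofReal_re] at this

section patterns
variable {u : ℂ} {t : ℝ}

lemma nz_M1 (h1 : 0 < u.re) (h2 : u.re ≤ Real.pi / 2) : Sb (Real.pi * (1/2)) u ≠ 0 := by
  intro h
  obtain ⟨k, _, hk1, hk2⟩ := strip_zero h1 h2 h
  have ha : (0:ℝ) < 2*(k:ℝ) := by nlinarith [Real.pi_pos]
  have hb : 2*(k:ℝ) ≤ 1 := by nlinarith [Real.pi_pos]
  have ha' : (0:ℤ) < 2*k := by exact_mod_cast ha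
  have hb' : (2:ℤ)*k ≤ 1 := by exact_mod_cast hb
  omega

lemma nz_M2 (ht0 : 0 < t) (ht1 : t < 1/2) (h1 : 0 < u.re) (h2 : u.re ≤ Real.pi / 2) :
    Sb (Real.pi * (t + 1)) u ≠ 0 := by
  intro h
  obtain ⟨k, _, hk1, hk2⟩ := strip_zero h1 h2 h
  have ha : (1:ℝ) < 2*(k:ℝ) := by nlinarith [Real.pi_pos]
  have hb : 2*(k:ℝ) < 2 := by nlinarith [Real.pi_pos]
  have ha' : (1:ℤ) < 2*k := by exact_mod_cast ha
  have hb' : (2:ℤ)*k < 2 := by exact_mod_cast hb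
  omega

lemma nz_M3 (ht0 : 0 < t) (ht1 : t < 1/2) (h1 : 0 < u.re) (h2 : u.re ≤ Real.pi / 2) :
    Sb (-(Real.pi * (t + 3/2))) u ≠ 0 := by
  intro h
  obtain ⟨k, _, hk1, hk2⟩ := strip_zero h1 h2 h
  have ha : (-2:ℝ) < 2*(k:ℝ) := by nlinarith [Real.pi_pos]
  have hb : 2*(k:ℝ) < -1 := by nlinarith [Real.pi_pos]
  have ha' : (-2:ℤ) < 2*k := by exact_mod_cast ha
  have hb' : (2:ℤ)*k < -1 := by exact_mod_cast hb
  omega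

lemma nz_M4 (ht0 : 0 < t) (ht1 : t < 1/2) (h1 : 0 < u.re) (h2 : u.re ≤ Real.pi / 2) :
    Sb (Real.pi * t) u ≠ 0 := by
  intro h
  obtain ⟨k, _, hk1, hk2⟩ := strip_zero h1 h2 h
  have ha : (0:ℝ) < 2*(k:ℝ) := by nlinarith [Real.pi_pos]
  have hb : 2*(k:ℝ) < 1 := by nlinarith [Real.pi_pos]
  have ha' : (0:ℤ) < 2*k := by exact_mod_cast ha
  have hb' : (2:ℤ)*k < 1 := by exact_mod_cast hb
  omega

lemma nz_N2 (ht0 : 0 < t) (ht1 : t < 1/2) (h1 : 0 < u.re) (h2 : u.re ≤ Real.pi / 2) :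
    Sb (-(Real.pi * (t + 1))) u ≠ 0 := by
  intro h
  obtain ⟨k, _, hk1, hk2⟩ := strip_zero h1 h2 h
  have ha : (-2:ℝ) < 2*(k:ℝ) := by nlinarith [Real.pi_pos]
  have hb : 2*(k:ℝ) < 0 := by nlinarith [Real.pi_pos]
  have ha' : (-2:ℤ) < 2*k := by exact_mod_cast ha
  have hb' : (2:ℤ)*k < 0 := by exact_mod_cast hb
  omega

lemma zc_N1 (h1 : 0 < u.re) (h2 : u.re ≤ Real.pi / 2) (h : Sb (-(Real.pi * (1/2))) u = 0) :
    u = ((Real.pi / 2 : ℝ) : ℂ) := by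
  obtain ⟨k, hu, hk1, hk2⟩ := strip_zero h1 h2 h
  have ha : (-1:ℝ) < 2*(k:ℝ) := by nlinarith [Real.pi_pos]
  have hb : 2*(k:ℝ) ≤ 0 := by nlinarith [Real.pi_pos]
  have ha' : (-1:ℤ) < 2*k := by exact_mod_cast ha
  have hb' : (2:ℤ)*k ≤ 0 := by exact_mod_cast hb
  have hk : k = 0 := by omega
  subst hk
  rw [hu]; congr 1; push_cast; ring

lemma zc_N3 (ht0 : 0 < t) (ht1 : t < 1/2) (h1 : 0 < u.re) (h2 : u.re ≤ Real.pi / 2)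
    (h : Sb (Real.pi * (t + 3/2)) u = 0) :
    u = ((Real.pi / 2 - Real.pi * t : ℝ) : ℂ) := by
  obtain ⟨k, hu, hk1, hk2⟩ := strip_zero h1 h2 h
  have ha : (1:ℝ) < 2*(k:ℝ) := by nlinarith [Real.pi_pos]
  have hb : 2*(k:ℝ) < 3 := by nlinarith [Real.pi_pos]
  have ha' : (1:ℤ) < 2*k := by exact_mod_cast ha
  have hb' : (2:ℤ)*k < 3 := by exact_mod_cast hb
  have hk : k = 1 := by omega
  subst hk
  rw [hu]; congr 1; push_cast; ring

lemma zc_N4 (ht0 : 0 < t) (ht1 : t < 1/2) (h1 : 0 < u.re) (h2 : u.re ≤ Real.pi / 2)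
    (h : Sb (-(Real.pi * t)) u = 0) :
    u = ((Real.pi * t : ℝ) : ℂ) := by
  obtain ⟨k, hu, hk1, hk2⟩ := strip_zero h1 h2 h
  have ha : (-1:ℝ) < 2*(k:ℝ) := by nlinarith [Real.pi_pos]
  have hb : 2*(k:ℝ) < 1 := by nlinarith [Real.pi_pos]
  have ha' : (-1:ℤ) < 2*k := by exact_mod_cast ha
  have hb' : (2:ℤ)*k < 1 := by exact_mod_cast hb
  have hk : k = 0 := by omega
  subst hk
  rw [hu]; congr 1; push_cast; ring

end patterns

lemma Sb_deriv (c : ℝ) (p : ℂ) : deriv (Sb c) p = Complex.cos ((p + (c:ℂ))/2) * (1/2) := by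
  have h : HasDerivAt (Sb c) (Complex.cos ((p + (c:ℂ))/2) * (1/2)) p := by
    have h1 : HasDerivAt (fun u : ℂ => (u + (c:ℂ)) / 2) (1/2) p := by
      simpa using ((hasDerivAt_id p).add_const (c:ℂ)).div_const 2
    exact (Complex.hasDerivAt_sin _).comp p h1
  exact h.deriv

lemma Sb_factor {c : ℝ} {p : ℂ} (hp : Sb c p = 0) :
    ∃ g : ℂ → ℂ, AnalyticAt ℂ g p ∧ g p ≠ 0 ∧ ∀ u, Sb c u = (u - p) * g u := by
  refine ⟨dslope (Sb c) p, ?_, ?_, ?_⟩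
  · obtain ⟨q, hq⟩ := (Sb_analyticAt c p)
    exact ⟨q.fslope, hq.has_fpower_series_dslope_fslope⟩
  · rw [dslope_same, Sb_deriv]
    intro hz
    have hcos : Complex.cos ((p + (c:ℂ))/2) = 0 := by
      rcases mul_eq_zero.1 hz with h | h
      · exact h
      · norm_num at h
    have := Complex.sin_sq_add_cos_sq ((p + (c:ℂ))/2)
    rw [show Complex.sin ((p + (c:ℂ))/2) = 0 from hp, hcos] at this
    norm_num at this
  · intro u
    have := sub_smul_dslope (Sb c) p u
    rw [hp, sub_zero, smul_eq_mul] at this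
    exact this.symm

noncomputable def prodSb (M : Multiset ℝ) (u : ℂ) : ℂ := (M.map (fun c => Sb c u)).prod

@[simp] lemma prodSb_zero (u : ℂ) : prodSb 0 u = 1 := by simp [prodSb]

@[simp] lemma prodSb_cons (c : ℝ) (M : Multiset ℝ) (u : ℂ) :
    prodSb (c ::ₘ M) u = Sb c u * prodSb M u := by simp [prodSb]

lemma prodSb_add (M N : Multiset ℝ) (u : ℂ) :
    prodSb (M + N) u = prodSb M u * prodSb N u := by simp [prodSb]

lemma prodSb_analyticAt (M : Multiset ℝ) (p : ℂ) : AnalyticAt ℂ (prodSb M) p := by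
  induction M using Multiset.induction_on with
  | empty =>
    have h0 : prodSb 0 = fun _ => (1:ℂ) := by funext u; simp
    rw [h0]; exact analyticAt_const
  | cons c M ih =>
    have : (prodSb (c ::ₘ M)) = fun u => Sb c u * prodSb M u := by
      funext u; simp
    rw [this]
    exact (Sb_analyticAt c p).mul ih

lemma prodSb_ne_zero {M : Multiset ℝ} {p : ℂ} (h : ∀ c ∈ M, Sb c p ≠ 0) :
    prodSb M p ≠ 0 := by
  rw [prodSb]
  apply Multiset.prod_ne_zero
  intro h0
  obtain ⟨c, hc, hc0⟩ := Multiset.mem_map.1 h0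
  exact h c hc hc0

lemma prodSb_factor {M : Multiset ℝ} {p : ℂ} (h : ∀ c ∈ M, Sb c p = 0) :
    ∃ g : ℂ → ℂ, AnalyticAt ℂ g p ∧ g p ≠ 0 ∧
      ∀ u, prodSb M u = (u - p) ^ (Multiset.card M) * g u := by
  induction M using Multiset.induction_on with
  | empty => exact ⟨fun _ => 1, analyticAt_const, one_ne_zero, by simp⟩
  | cons c M ih =>
    obtain ⟨g, hg, hg0, hgu⟩ := ih (fun c hc => h c (Multiset.mem_cons_of_mem hc))
    obtain ⟨g1, hg1, hg10, hg1u⟩ := Sb_factor (h c (Multiset.mem_cons_self c M))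
    refine ⟨fun u => g1 u * g u, hg1.mul hg, mul_ne_zero hg10 hg0, fun u => ?_⟩
    rw [prodSb_cons, hgu, hg1u, Multiset.card_cons, pow_succ]
    ring

lemma blk_eq (y : ℝ) (u : ℂ) : blk y u = Sb (Real.pi * y) u / Sb (-(Real.pi * y)) u := by
  rw [blk, Sb, Sb]
  push_cast
  rw [sub_eq_add_neg]

lemma ratio_analytic {M N : Multiset ℝ} {p : ℂ}
    (hM : ∀ c ∈ M, Sb c p ≠ 0) (hN : ∀ c ∈ N, Sb c p ≠ 0) :
    AnalyticAt ℂ (fun u => prodSb M u / prodSb N u) p ∧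
      prodSb M p / prodSb N p ≠ 0 :=
  ⟨(prodSb_analyticAt M p).div (prodSb_analyticAt N p) (prodSb_ne_zero hN),
    div_ne_zero (prodSb_ne_zero hM) (prodSb_ne_zero hN)⟩

lemma ratio_pole {M N₀ N₁ : Multiset ℝ} {p : ℂ} {m : ℕ} (hm : Multiset.card N₁ = m)
    (hM : ∀ c ∈ M, Sb c p ≠ 0) (hN₀ : ∀ c ∈ N₀, Sb c p ≠ 0)
    (hN₁ : ∀ c ∈ N₁, Sb c p = 0) :
    HasPoleOfOrder (fun u => prodSb M u / prodSb (N₀ + N₁) u) p m := by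
  obtain ⟨g, hg, hg0, hgu⟩ := prodSb_factor hN₁
  refine ⟨fun u => prodSb M u / (prodSb N₀ u * g u), ?_, ?_, ?_⟩
  · exact (prodSb_analyticAt M p).div ((prodSb_analyticAt N₀ p).mul hg)
      (mul_ne_zero (prodSb_ne_zero hN₀) hg0)
  · exact div_ne_zero (prodSb_ne_zero hM) (mul_ne_zero (prodSb_ne_zero hN₀) hg0)
  · filter_upwards with u
    rw [prodSb_add, hgu u, hm]
    simp only [div_eq_mul_inv, mul_inv]
    ring



noncomputable def tM (t : ℝ) : Multiset ℝ :=
  {Real.pi * t, Real.pi * (t + 1), -(Real.pi * (t + 3/2)), -(Real.pi * (t + 3/2))}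

noncomputable def tN (t : ℝ) : Multiset ℝ :=
  {-(Real.pi * t), -(Real.pi * (t + 1)), Real.pi * (t + 3/2), Real.pi * (t + 3/2)}

noncomputable def Mnum (lam : ℝ) (n : ℕ) : Multiset ℝ :=
  {Real.pi * (1/2), Real.pi * ((n:ℝ)/(2*lam) + 1), -(Real.pi * ((n:ℝ)/(2*lam) + 3/2))} +
  (Finset.Icc 1 (n-1)).val.bind (fun l => tM ((l:ℝ)/(2*lam)))

noncomputable def Nden (lam : ℝ) (n : ℕ) : Multiset ℝ :=
  {-(Real.pi * (1/2)), -(Real.pi * ((n:ℝ)/(2*lam) + 1)), Real.pi * ((n:ℝ)/(2*lam) + 3/2)} +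
  (Finset.Icc 1 (n-1)).val.bind (fun l => tN ((l:ℝ)/(2*lam)))

lemma prodSb_bind (s : Finset ℕ) (t : ℕ → Multiset ℝ) (u : ℂ) :
    prodSb (s.val.bind t) u = ∏ l ∈ s, prodSb (t l) u := by
  rw [prodSb, Multiset.map_bind, Multiset.prod_bind, Finset.prod_eq_multiset_prod]
  rfl

lemma R0_eq (lam : ℝ) (n : ℕ) (u : ℂ) :
    R0brn lam n u = prodSb (Mnum lam n) u / prodSb (Nden lam n) u := by
  have e1 : prodSb (Mnum lam n) u =
      (Sb (Real.pi * (1/2)) u * Sb (Real.pi * ((n:ℝ)/(2*lam) + 1)) u *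
        Sb (-(Real.pi * ((n:ℝ)/(2*lam) + 3/2))) u) *
      ∏ l ∈ Finset.Icc 1 (n-1),
        (Sb (Real.pi * ((l:ℝ)/(2*lam))) u * Sb (Real.pi * ((l:ℝ)/(2*lam) + 1)) u *
          Sb (-(Real.pi * ((l:ℝ)/(2*lam) + 3/2))) u ^ 2) := by
    rw [Mnum, prodSb_add, prodSb_bind]
    congr 1
    · simp only [prodSb, Multiset.insert_eq_cons, Multiset.map_cons, Multiset.map_singleton,
        Multiset.prod_cons, Multiset.prod_singleton]
      ring
    · refine Finset.prod_congr rfl fun l _ => ?_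
      simp only [tM, prodSb, Multiset.insert_eq_cons, Multiset.map_cons, Multiset.map_singleton,
        Multiset.prod_cons, Multiset.prod_singleton]
      ring
  have e2 : prodSb (Nden lam n) u =
      (Sb (-(Real.pi * (1/2))) u * Sb (-(Real.pi * ((n:ℝ)/(2*lam) + 1))) u *
        Sb (Real.pi * ((n:ℝ)/(2*lam) + 3/2)) u) *
      ∏ l ∈ Finset.Icc 1 (n-1),
        (Sb (-(Real.pi * ((l:ℝ)/(2*lam)))) u * Sb (-(Real.pi * ((l:ℝ)/(2*lam) + 1))) u *
          Sb (Real.pi * ((l:ℝ)/(2*lam) + 3/2)) u ^ 2) := by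
    rw [Nden, prodSb_add, prodSb_bind]
    congr 1
    · simp only [prodSb, Multiset.insert_eq_cons, Multiset.map_cons, Multiset.map_singleton,
        Multiset.prod_cons, Multiset.prod_singleton]
      ring
    · refine Finset.prod_congr rfl fun l _ => ?_
      simp only [tN, prodSb, Multiset.insert_eq_cons, Multiset.map_cons, Multiset.map_singleton,
        Multiset.prod_cons, Multiset.prod_singleton]
      ring
  rw [e1, e2, R0brn]
  have hT : ∀ l ∈ Finset.Icc 1 (n-1),
      (blk ((l:ℝ)/(2*lam)) u * blk ((l:ℝ)/(2*lam) + 1) u) /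
        (blk ((l:ℝ)/(2*lam) + 3/2) u)^2
      = (Sb (Real.pi * ((l:ℝ)/(2*lam))) u * Sb (Real.pi * ((l:ℝ)/(2*lam) + 1)) u *
          Sb (-(Real.pi * ((l:ℝ)/(2*lam) + 3/2))) u ^ 2) /
        (Sb (-(Real.pi * ((l:ℝ)/(2*lam)))) u * Sb (-(Real.pi * ((l:ℝ)/(2*lam) + 1))) u *
          Sb (Real.pi * ((l:ℝ)/(2*lam) + 3/2)) u ^ 2) := by
    intro l _
    rw [blk_eq, blk_eq, blk_eq]
    simp only [div_eq_mul_inv, mul_inv, ← inv_pow, inv_inv]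
    ring
  rw [Finset.prod_congr rfl hT, Finset.prod_div_distrib, blk_eq, blk_eq, blk_eq]
  generalize (∏ l ∈ Finset.Icc 1 (n-1),
        (Sb (Real.pi * ((l:ℝ)/(2*lam))) u * Sb (Real.pi * ((l:ℝ)/(2*lam) + 1)) u *
          Sb (-(Real.pi * ((l:ℝ)/(2*lam) + 3/2))) u ^ 2)) = P
  generalize (∏ l ∈ Finset.Icc 1 (n-1),
        (Sb (-(Real.pi * ((l:ℝ)/(2*lam)))) u * Sb (-(Real.pi * ((l:ℝ)/(2*lam) + 1))) u *
          Sb (Real.pi * ((l:ℝ)/(2*lam) + 3/2)) u ^ 2)) = Q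
  simp only [div_eq_mul_inv, mul_inv, ← inv_pow, inv_inv]
  ring

lemma nz_tM {u : ℂ} {t : ℝ} (ht0 : 0 < t) (ht1 : t < 1/2)
    (h1 : 0 < u.re) (h2 : u.re ≤ Real.pi / 2) : ∀ c ∈ tM t, Sb c u ≠ 0 := by
  intro c hc
  simp only [tM, Multiset.insert_eq_cons, Multiset.mem_cons, Multiset.mem_singleton] at hc
  rcases hc with rfl | rfl | rfl | rfl
  · exact nz_M4 ht0 ht1 h1 h2
  · exact nz_M2 ht0 ht1 h1 h2
  · exact nz_M3 ht0 ht1 h1 h2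
  · exact nz_M3 ht0 ht1 h1 h2

lemma nz_tN {u : ℂ} {t : ℝ} (ht0 : 0 < t) (ht1 : t < 1/2)
    (h1 : 0 < u.re) (h2 : u.re ≤ Real.pi / 2)
    (hx4 : u ≠ ((Real.pi * t : ℝ) : ℂ))
    (hx5 : u ≠ ((Real.pi / 2 - Real.pi * t : ℝ) : ℂ)) : ∀ c ∈ tN t, Sb c u ≠ 0 := by
  intro c hc
  simp only [tN, Multiset.insert_eq_cons, Multiset.mem_cons, Multiset.mem_singleton] at hc
  rcases hc with rfl | rfl | rfl | rfl
  · exact fun h0 => hx4 (zc_N4 ht0 ht1 h1 h2 h0)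
  · exact nz_N2 ht0 ht1 h1 h2
  · exact fun h0 => hx5 (zc_N3 ht0 ht1 h1 h2 h0)
  · exact fun h0 => hx5 (zc_N3 ht0 ht1 h1 h2 h0)

lemma nz_Mall {lam : ℝ} {n : ℕ} {u : ℂ}
    (hA0 : 0 < (n:ℝ)/(2*lam)) (hA1 : (n:ℝ)/(2*lam) < 1/2)
    (hB : ∀ l : ℕ, 1 ≤ l → l ≤ n-1 → 0 < (l:ℝ)/(2*lam) ∧ (l:ℝ)/(2*lam) < 1/2)
    (h1 : 0 < u.re) (h2 : u.re ≤ Real.pi / 2) : ∀ c ∈ Mnum lam n, Sb c u ≠ 0 := by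
  intro c hc
  simp only [Mnum, Multiset.mem_add, Multiset.insert_eq_cons, Multiset.mem_cons,
    Multiset.mem_singleton, Multiset.mem_bind, Finset.mem_val, Finset.mem_Icc] at hc
  rcases hc with (rfl | rfl | rfl) | ⟨l, ⟨hl1, hl2⟩, hc⟩
  · exact nz_M1 h1 h2
  · exact nz_M2 hA0 hA1 h1 h2
  · exact nz_M3 hA0 hA1 h1 h2
  · exact nz_tM (hB l hl1 hl2).1 (hB l hl1 hl2).2 h1 h2 c hc

lemma bind_extract {s : Finset ℕ} {l₀ : ℕ} (h : l₀ ∈ s) (t : ℕ → Multiset ℝ) :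
    s.val.bind t = t l₀ + (s.erase l₀).val.bind t := by
  have hv : s.val = l₀ ::ₘ (s.erase l₀).val := by
    rw [Finset.erase_val, Multiset.cons_erase (by simpa using h)]
  rw [hv, Multiset.cons_bind]

/-- For `1 ≤ n < λ`, if the points `π/2`, `π/2 − lπ/(2λ)` (`1 ≤ l ≤ n`), `lπ/(2λ)`
(`1 ≤ l ≤ n−1`) are pairwise distinct, then in the strip `0 < Re u ≤ π/2` the function
`R_0^{(n)}` has poles exactly at `π/2` (simple), `lπ/(2λ)` for `1 ≤ l ≤ n−1` (simple),
`π/2 − nπ/(2λ)` (simple) and `π/2 − lπ/(2λ)` for `1 ≤ l ≤ n−1` (order two), and has no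
zeroes in this strip. -/
theorem stmt16 (lam : ℝ) (n : ℕ) (hn : 1 ≤ n) (hlam : (n : ℝ) < lam)
    (hdist : (([Real.pi / 2] ++
        ((List.range n).map fun l => Real.pi / 2 - ((l : ℝ) + 1) * Real.pi / (2 * lam)) ++
        ((List.range (n - 1)).map fun l => ((l : ℝ) + 1) * Real.pi / (2 * lam))) :
        List ℝ).Nodup) :
    (∀ u : ℂ, 0 < u.re → u.re ≤ Real.pi / 2 →
        u ≠ ((Real.pi / 2 : ℝ) : ℂ) →
        (∀ l : ℕ, 1 ≤ l → l ≤ n - 1 → u ≠ (((l : ℝ) * Real.pi / (2 * lam) : ℝ) : ℂ)) →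
        (∀ l : ℕ, 1 ≤ l → l ≤ n →
          u ≠ ((Real.pi / 2 - (l : ℝ) * Real.pi / (2 * lam) : ℝ) : ℂ)) →
        AnalyticAt ℂ (R0brn lam n) u ∧ R0brn lam n u ≠ 0) ∧
    HasPoleOfOrder (R0brn lam n) ((Real.pi / 2 : ℝ) : ℂ) 1 ∧
    (∀ l : ℕ, 1 ≤ l → l ≤ n - 1 →
      HasPoleOfOrder (R0brn lam n) (((l : ℝ) * Real.pi / (2 * lam) : ℝ) : ℂ) 1) ∧
    HasPoleOfOrder (R0brn lam n)
      ((Real.pi / 2 - (n : ℝ) * Real.pi / (2 * lam) : ℝ) : ℂ) 1 ∧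
    (∀ l : ℕ, 1 ≤ l → l ≤ n - 1 →
      HasPoleOfOrder (R0brn lam n)
        ((Real.pi / 2 - (l : ℝ) * Real.pi / (2 * lam) : ℝ) : ℂ) 2) := by
  have hpi := Real.pi_pos
  have hn1 : (1:ℝ) ≤ (n:ℝ) := by exact_mod_cast hn
  have hlam0 : (0:ℝ) < lam := by linarith
  have hA0 : 0 < (n:ℝ)/(2*lam) := div_pos (by linarith) (by linarith)
  have hA1 : (n:ℝ)/(2*lam) < 1/2 := by rw [div_lt_iff₀ (by linarith)]; linarith
  have hB : ∀ l : ℕ, 1 ≤ l → l ≤ n-1 → 0 < (l:ℝ)/(2*lam) ∧ (l:ℝ)/(2*lam) < 1/2 := by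
    intro l h1 h2
    have hl1 : (1:ℝ) ≤ (l:ℝ) := by exact_mod_cast h1
    have hl2 : (l:ℝ) < (n:ℝ) := by exact_mod_cast (by omega : l < n)
    exact ⟨div_pos (by linarith) (by linarith), by rw [div_lt_iff₀ (by linarith)]; linarith⟩
  -- distinctness facts
  rw [List.append_assoc, List.singleton_append, List.nodup_cons] at hdist
  obtain ⟨hnotmem, hnd⟩ := hdist
  have hdisj := (List.nodup_append.1 hnd).2.2
  have fact1 : ∀ l : ℕ, 1 ≤ l → l ≤ n-1 →
      Real.pi/2 ≠ (l:ℝ) * Real.pi / (2*lam) := by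
    intro l h1 h2 heq
    have hc : ((l-1:ℕ):ℝ) = (l:ℝ) - 1 := by
      have := Nat.cast_sub (R := ℝ) h1
      simpa using this
    apply hnotmem
    apply List.mem_append_right
    simp only [List.mem_map, List.mem_range, List.bind_eq_flatMap, List.mem_flatMap,
      List.mem_pure]
    exact ⟨((l-1:ℕ):ℝ), ⟨l-1, by omega, rfl⟩, by rw [hc]; linear_combination -heq⟩
  have fact2 : ∀ l l' : ℕ, 1 ≤ l → l ≤ n → 1 ≤ l' → l' ≤ n-1 →
      Real.pi/2 - (l:ℝ) * Real.pi / (2*lam) ≠ (l':ℝ) * Real.pi / (2*lam) := by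
    intro l l' h1 h2 h1' h2' heq
    have hc : ((l-1:ℕ):ℝ) = (l:ℝ) - 1 := by
      have := Nat.cast_sub (R := ℝ) h1
      simpa using this
    have hc' : ((l'-1:ℕ):ℝ) = (l':ℝ) - 1 := by
      have := Nat.cast_sub (R := ℝ) h1'
      simpa using this
    apply hdisj (a := Real.pi/2 - (l:ℝ) * Real.pi / (2*lam))
    · simp only [List.mem_map, List.mem_range, List.bind_eq_flatMap, List.mem_flatMap,
        List.mem_pure]
      exact ⟨((l-1:ℕ):ℝ), ⟨l-1, by omega, rfl⟩, by rw [hc]; ring⟩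
    · simp only [List.mem_map, List.mem_range, List.bind_eq_flatMap, List.mem_flatMap,
        List.mem_pure]
      exact ⟨((l'-1:ℕ):ℝ), ⟨l'-1, by omega, rfl⟩, rfl⟩
    · rw [hc']; linear_combination heq
  have cancel : ∀ x y : ℝ, x * Real.pi / (2*lam) = y * Real.pi / (2*lam) → x = y := by
    intro x y h
    have hne : (2*lam) ≠ 0 := ne_of_gt (by linarith)
    have h2 : x * Real.pi = y * Real.pi := by
      have := congrArg (fun z : ℝ => z * (2*lam)) h
      simpa [div_mul_cancel₀, hne] using this
    exact mul_right_cancel₀ (ne_of_gt hpi) h2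
  have hfun : R0brn lam n = fun v => prodSb (Mnum lam n) v / prodSb (Nden lam n) v :=
    funext (R0_eq lam n)
  refine ⟨?_, ?_, ?_, ?_, ?_⟩
  -- generic part
  · intro u h1 h2 h3 h4 h5
    have hM := nz_Mall hA0 hA1 hB h1 h2
    have hN : ∀ c ∈ Nden lam n, Sb c u ≠ 0 := by
      intro c hc
      simp only [Nden, Multiset.mem_add, Multiset.insert_eq_cons, Multiset.mem_cons,
        Multiset.mem_singleton, Multiset.mem_bind, Finset.mem_val, Finset.mem_Icc] at hc
      rcases hc with (rfl | rfl | rfl) | ⟨l, ⟨hl1, hl2⟩, hc⟩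
      · exact fun h0 => h3 (zc_N1 h1 h2 h0)
      · exact nz_N2 hA0 hA1 h1 h2
      · exact fun h0 => h5 n hn le_rfl
          ((zc_N3 hA0 hA1 h1 h2 h0).trans (Complex.ofReal_inj.2 (by ring)))
      · exact nz_tN (hB l hl1 hl2).1 (hB l hl1 hl2).2 h1 h2
          (fun he => h4 l hl1 hl2 (he.trans (Complex.ofReal_inj.2 (by ring))))
          (fun he => h5 l hl1 (le_trans hl2 (Nat.sub_le n 1))
            (he.trans (Complex.ofReal_inj.2 (by ring)))) c hc
    obtain ⟨ha, hb⟩ := ratio_analytic hM hN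
    exact ⟨hfun ▸ ha, by rw [R0_eq]; exact hb⟩
  -- pole at π/2
  · have h1 : (0:ℝ) < ((Real.pi/2 : ℝ):ℂ).re := by rw [Complex.ofReal_re]; linarith
    have h2 : ((Real.pi/2 : ℝ):ℂ).re ≤ Real.pi/2 := by rw [Complex.ofReal_re]
    have hsplit : Nden lam n =
        (({-(Real.pi * ((n:ℝ)/(2*lam) + 1)), Real.pi * ((n:ℝ)/(2*lam) + 3/2)} : Multiset ℝ) +
          (Finset.Icc 1 (n-1)).val.bind (fun l => tN ((l:ℝ)/(2*lam)))) +
        ({-(Real.pi * (1/2))} : Multiset ℝ) := by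
      rw [Nden]
      simp only [Multiset.insert_eq_cons, ← Multiset.singleton_add]
      abel
    rw [hfun, hsplit]
    apply ratio_pole (by simp)
    · exact nz_Mall hA0 hA1 hB h1 h2
    · intro c hc
      simp only [Multiset.mem_add, Multiset.insert_eq_cons, Multiset.mem_cons,
        Multiset.mem_singleton, Multiset.mem_bind, Finset.mem_val, Finset.mem_Icc] at hc
      rcases hc with (rfl | rfl) | ⟨l, ⟨hl1, hl2⟩, hc⟩
      · exact nz_N2 hA0 hA1 h1 h2
      · intro h0
        have := Complex.ofReal_inj.1 (zc_N3 hA0 hA1 h1 h2 h0)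
        nlinarith
      · refine nz_tN (hB l hl1 hl2).1 (hB l hl1 hl2).2 h1 h2 ?_ ?_ c hc
        · intro he
          exact fact1 l hl1 hl2 (by linear_combination Complex.ofReal_inj.1 he)
        · intro he
          have := Complex.ofReal_inj.1 he
          have hb0 := (hB l hl1 hl2).1
          nlinarith
    · intro c hc
      simp only [Multiset.mem_singleton] at hc
      subst hc
      rw [Sb, show ((((Real.pi/2 : ℝ)):ℂ) + ((-(Real.pi * (1/2)) : ℝ):ℂ))/2 = 0 by
        push_cast; ring]
      exact Complex.sin_zero
  -- poles at lπ/(2λ)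
  · intro l₀ hl₀1 hl₀2
    have hmem : l₀ ∈ Finset.Icc 1 (n-1) := Finset.mem_Icc.2 ⟨hl₀1, hl₀2⟩
    obtain ⟨hB0, hB1⟩ := hB l₀ hl₀1 hl₀2
    set p : ℂ := (((l₀:ℝ) * Real.pi / (2*lam) : ℝ) : ℂ) with hp
    have hl0r : (1:ℝ) ≤ (l₀:ℝ) := by exact_mod_cast hl₀1
    have hval : (l₀:ℝ) * Real.pi / (2*lam) = Real.pi * ((l₀:ℝ)/(2*lam)) := by ring
    have h1 : (0:ℝ) < p.re := by
      rw [hp, Complex.ofReal_re, hval]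
      nlinarith
    have h2 : p.re ≤ Real.pi/2 := by
      rw [hp, Complex.ofReal_re, hval]
      nlinarith
    have hsplit : Nden lam n =
        (({-(Real.pi * (1/2)), -(Real.pi * ((n:ℝ)/(2*lam) + 1)),
            Real.pi * ((n:ℝ)/(2*lam) + 3/2)} : Multiset ℝ) +
          (({-(Real.pi * ((l₀:ℝ)/(2*lam) + 1)), Real.pi * ((l₀:ℝ)/(2*lam) + 3/2),
            Real.pi * ((l₀:ℝ)/(2*lam) + 3/2)} : Multiset ℝ) +
           ((Finset.Icc 1 (n-1)).erase l₀).val.bind (fun l => tN ((l:ℝ)/(2*lam))))) +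
        ({-(Real.pi * ((l₀:ℝ)/(2*lam)))} : Multiset ℝ) := by
      rw [Nden, bind_extract hmem]
      simp only [tN, Multiset.insert_eq_cons, ← Multiset.singleton_add]
      abel
    rw [hfun, hsplit]
    apply ratio_pole (by simp)
    · exact nz_Mall hA0 hA1 hB h1 h2
    · intro c hc
      simp only [Multiset.mem_add, Multiset.insert_eq_cons, Multiset.mem_cons,
        Multiset.mem_singleton, Multiset.mem_bind, Finset.mem_val, Finset.mem_erase,
        Finset.mem_Icc] at hc
      rcases hc with (rfl | rfl | rfl) | (rfl | rfl | rfl) | ⟨l, ⟨hlne, hl1, hl2⟩, hc⟩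
      · intro h0
        exact fact1 l₀ hl₀1 hl₀2 (Complex.ofReal_inj.1 (zc_N1 h1 h2 h0)).symm
      · exact nz_N2 hA0 hA1 h1 h2
      · intro h0
        have he := Complex.ofReal_inj.1 (zc_N3 hA0 hA1 h1 h2 h0)
        exact fact2 n l₀ hn le_rfl hl₀1 hl₀2 (by linear_combination -he)
      · exact nz_N2 hB0 hB1 h1 h2
      · intro h0
        have he := Complex.ofReal_inj.1 (zc_N3 hB0 hB1 h1 h2 h0)
        exact fact2 l₀ l₀ hl₀1 (le_trans hl₀2 (Nat.sub_le n 1)) hl₀1 hl₀2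
          (by linear_combination -he)
      · intro h0
        have he := Complex.ofReal_inj.1 (zc_N3 hB0 hB1 h1 h2 h0)
        exact fact2 l₀ l₀ hl₀1 (le_trans hl₀2 (Nat.sub_le n 1)) hl₀1 hl₀2
          (by linear_combination -he)
      · obtain ⟨hb0, hb1⟩ := hB l hl1 hl2
        refine nz_tN hb0 hb1 h1 h2 ?_ ?_ c hc
        · intro he
          have he' := Complex.ofReal_inj.1 he
          have hll : (l₀:ℝ) = (l:ℝ) := cancel _ _ (by linear_combination he')
          exact hlne (by exact_mod_cast hll.symm)
        · intro he
          have he' := Complex.ofReal_inj.1 he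
          exact fact2 l l₀ hl1 (by omega) hl₀1 hl₀2 (by linear_combination -he')
    · intro c hc
      simp only [Multiset.mem_singleton] at hc
      subst hc
      rw [Sb, show ((p : ℂ) + ((-(Real.pi * ((l₀:ℝ)/(2*lam))) : ℝ):ℂ))/2 = 0 by
        rw [hp]; push_cast; ring]
      exact Complex.sin_zero
  -- pole at π/2 - nπ/(2λ)
  · set p : ℂ := ((Real.pi/2 - (n:ℝ) * Real.pi / (2*lam) : ℝ) : ℂ) with hp
    have hval : (n:ℝ) * Real.pi / (2*lam) = Real.pi * ((n:ℝ)/(2*lam)) := by ring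
    have hpos : 0 < (n:ℝ) * Real.pi / (2*lam) := by rw [hval]; nlinarith
    have h1 : (0:ℝ) < p.re := by
      rw [hp, Complex.ofReal_re, hval]
      nlinarith
    have h2 : p.re ≤ Real.pi/2 := by
      rw [hp, Complex.ofReal_re]
      linarith
    have hsplit : Nden lam n =
        (({-(Real.pi * (1/2)), -(Real.pi * ((n:ℝ)/(2*lam) + 1))} : Multiset ℝ) +
          (Finset.Icc 1 (n-1)).val.bind (fun l => tN ((l:ℝ)/(2*lam)))) +
        ({Real.pi * ((n:ℝ)/(2*lam) + 3/2)} : Multiset ℝ) := by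
      rw [Nden]
      simp only [Multiset.insert_eq_cons, ← Multiset.singleton_add]
      abel
    rw [hfun, hsplit]
    apply ratio_pole (by simp)
    · exact nz_Mall hA0 hA1 hB h1 h2
    · intro c hc
      simp only [Multiset.mem_add, Multiset.insert_eq_cons, Multiset.mem_cons,
        Multiset.mem_singleton, Multiset.mem_bind, Finset.mem_val, Finset.mem_Icc] at hc
      rcases hc with (rfl | rfl) | ⟨l, ⟨hl1, hl2⟩, hc⟩
      · intro h0
        have he := Complex.ofReal_inj.1 (zc_N1 h1 h2 h0)
        linarith
      · exact nz_N2 hA0 hA1 h1 h2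
      · obtain ⟨hb0, hb1⟩ := hB l hl1 hl2
        refine nz_tN hb0 hb1 h1 h2 ?_ ?_ c hc
        · intro he
          have he' := Complex.ofReal_inj.1 he
          exact fact2 n l hn le_rfl hl1 hl2 (by linear_combination he')
        · intro he
          have he' := Complex.ofReal_inj.1 he
          have hln : (l:ℝ) < (n:ℝ) := by exact_mod_cast (by omega : l < n)
          have hll : (n:ℝ) = (l:ℝ) := cancel _ _ (by linear_combination -he')
          linarith
    · intro c hc
      simp only [Multiset.mem_singleton] at hc
      subst hc
      rw [Sb, show ((p : ℂ) + ((Real.pi * ((n:ℝ)/(2*lam) + 3/2) : ℝ):ℂ))/2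
          = ((Real.pi : ℝ):ℂ) by
        rw [hp]; push_cast; ring]
      exact Complex.sin_pi
  -- poles at π/2 - lπ/(2λ)
  · intro l₀ hl₀1 hl₀2
    have hmem : l₀ ∈ Finset.Icc 1 (n-1) := Finset.mem_Icc.2 ⟨hl₀1, hl₀2⟩
    obtain ⟨hB0, hB1⟩ := hB l₀ hl₀1 hl₀2
    set p : ℂ := ((Real.pi/2 - (l₀:ℝ) * Real.pi / (2*lam) : ℝ) : ℂ) with hp
    have hl0r : (1:ℝ) ≤ (l₀:ℝ) := by exact_mod_cast hl₀1
    have hval : (l₀:ℝ) * Real.pi / (2*lam) = Real.pi * ((l₀:ℝ)/(2*lam)) := by ring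
    have hpos : 0 < (l₀:ℝ) * Real.pi / (2*lam) := by rw [hval]; nlinarith
    have h1 : (0:ℝ) < p.re := by
      rw [hp, Complex.ofReal_re, hval]
      nlinarith
    have h2 : p.re ≤ Real.pi/2 := by
      rw [hp, Complex.ofReal_re]
      linarith
    have hsplit : Nden lam n =
        (({-(Real.pi * (1/2)), -(Real.pi * ((n:ℝ)/(2*lam) + 1)),
            Real.pi * ((n:ℝ)/(2*lam) + 3/2)} : Multiset ℝ) +
          (({-(Real.pi * ((l₀:ℝ)/(2*lam))), -(Real.pi * ((l₀:ℝ)/(2*lam) + 1))} : Multiset ℝ) +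
           ((Finset.Icc 1 (n-1)).erase l₀).val.bind (fun l => tN ((l:ℝ)/(2*lam))))) +
        ({Real.pi * ((l₀:ℝ)/(2*lam) + 3/2),
          Real.pi * ((l₀:ℝ)/(2*lam) + 3/2)} : Multiset ℝ) := by
      rw [Nden, bind_extract hmem]
      simp only [tN, Multiset.insert_eq_cons, ← Multiset.singleton_add]
      abel
    rw [hfun, hsplit]
    apply ratio_pole (by simp)
    · exact nz_Mall hA0 hA1 hB h1 h2
    · intro c hc
      simp only [Multiset.mem_add, Multiset.insert_eq_cons, Multiset.mem_cons,
        Multiset.mem_singleton, Multiset.mem_bind, Finset.mem_val, Finset.mem_erase,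
        Finset.mem_Icc] at hc
      rcases hc with (rfl | rfl | rfl) | (rfl | rfl) | ⟨l, ⟨hlne, hl1, hl2⟩, hc⟩
      · intro h0
        have he := Complex.ofReal_inj.1 (zc_N1 h1 h2 h0)
        linarith
      · exact nz_N2 hA0 hA1 h1 h2
      · intro h0
        have he := Complex.ofReal_inj.1 (zc_N3 hA0 hA1 h1 h2 h0)
        have hln : (l₀:ℝ) < (n:ℝ) := by exact_mod_cast (by omega : l₀ < n)
        have hll : (l₀:ℝ) = (n:ℝ) := cancel _ _ (by linear_combination -he)
        linarith
      · intro h0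
        have he := Complex.ofReal_inj.1 (zc_N4 hB0 hB1 h1 h2 h0)
        exact fact2 l₀ l₀ hl₀1 (le_trans hl₀2 (Nat.sub_le n 1)) hl₀1 hl₀2
          (by linear_combination he)
      · exact nz_N2 hB0 hB1 h1 h2
      · obtain ⟨hb0, hb1⟩ := hB l hl1 hl2
        refine nz_tN hb0 hb1 h1 h2 ?_ ?_ c hc
        · intro he
          have he' := Complex.ofReal_inj.1 he
          exact fact2 l₀ l hl₀1 (le_trans hl₀2 (Nat.sub_le n 1)) hl1 hl2
            (by linear_combination he')
        · intro he
          have he' := Complex.ofReal_inj.1 he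
          have hll : (l₀:ℝ) = (l:ℝ) := cancel _ _ (by linear_combination -he')
          exact hlne (by exact_mod_cast hll.symm)
    · intro c hc
      simp only [Multiset.insert_eq_cons, Multiset.mem_cons, Multiset.mem_singleton] at hc
      rcases hc with rfl | rfl <;>
      · rw [Sb, show ((p : ℂ) + ((Real.pi * ((l₀:ℝ)/(2*lam) + 3/2) : ℝ):ℂ))/2
            = ((Real.pi : ℝ):ℂ) by
          rw [hp]; push_cast; ring]
        exact Complex.sin_pi
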